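/- Let (V, ω) be a real symplectic vector space and let 𝔖(V,ω) be the set of compatible complex structures (J² = −id, J*ω = ω, g_J positive definite). The symplectic group Sp(V,ω) acts on 𝔖(V,ω) by conjugation a·J = aJa⁻¹, and this action is transitive. -/

import Mathlib

open Module

/-- Type synonym for `V` carrying the complex structure `J`. -/
abbrev CxAux {V : Type*} [AddCommGroup V] [Module ℝ V] (_J : V →ₗ[ℝ] V) : Type _ := V

theorem torelli_aux {V : Type*} [AddCommGroup V] [Module ℝ V] [FiniteDimensional ℝ V]
    (ω : V →ₗ[ℝ] V →ₗ[ℝ] ℝ)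
    (hanti : ∀ x y, ω x y = -ω y x)
    (J : V →ₗ[ℝ] V)
    (hJ2 : ∀ v, J (J v) = -v) (hJω : ∀ x y, ω (J x) (J y) = ω x y)
    (hJpos : ∀ x, x ≠ 0 → 0 < ω x (J x)) :
    ∃ e : V ≃ₗ[ℝ] EuclideanSpace ℂ (Fin (finrank ℝ V / 2)),
      (∀ x y, ω x y = (inner ℂ (e x) (e y)).im) ∧
      (∀ x, e (J x) = Complex.I • e x) := by
  letI : AddCommGroup (CxAux J) := inferInstanceAs (AddCommGroup V)
  letI : Module ℝ (CxAux J) := inferInstanceAs (Module ℝ V)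
  letI : FiniteDimensional ℝ (CxAux J) := inferInstanceAs (FiniteDimensional ℝ V)
  letI modC : Module ℂ (CxAux J) :=
    { smul := fun c x => c.re • (x : V) + c.im • J x
      one_smul := fun x => by
        show (1:ℂ).re • (x : V) + (1:ℂ).im • J x = x
        simp
      mul_smul := fun c d x => by
        show (c*d).re • (x : V) + (c*d).im • J x
          = c.re • (d.re • (x:V) + d.im • J x) + c.im • J (d.re • (x:V) + d.im • J x)
        simp only [Complex.mul_re, Complex.mul_im, map_add, map_smul, hJ2, smul_add,
          smul_smul, smul_neg, sub_smul, add_smul]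
        abel
      smul_zero := fun c => by
        show c.re • (0 : V) + c.im • J 0 = 0
        simp
      smul_add := fun c x y => by
        show c.re • ((x:V) + y) + c.im • J ((x:V)+y)
          = (c.re • (x:V) + c.im • J x) + (c.re • (y:V) + c.im • J y)
        simp only [map_add, smul_add]
        abel
      add_smul := fun c d x => by
        show (c+d).re • (x : V) + (c+d).im • J x
          = (c.re • (x:V) + c.im • J x) + (d.re • (x:V) + d.im • J x)
        simp only [Complex.add_re, Complex.add_im, add_smul]
        abel
      zero_smul := fun x => by
        show (0:ℂ).re • (x : V) + (0:ℂ).im • J x = 0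
        simp }
  have hsmul : ∀ (c : ℂ) (x : CxAux J), c • x = c.re • (x : V) + c.im • J x := fun _ _ => rfl
  letI : IsScalarTower ℝ ℂ (CxAux J) := by
    constructor
    intro r c x
    rw [hsmul, hsmul]
    try simp [Complex.smul_re, Complex.smul_im, mul_smul, smul_add]
  have hgsymm : ∀ x y : V, ω x (J y) = ω y (J x) := by
    intro x y
    calc ω x (J y) = ω (J x) (J (J y)) := (hJω x (J y)).symm
    _ = ω (J x) (-y) := by rw [hJ2]
    _ = - ω (J x) y := by simp
    _ = ω y (J x) := by linarith [hanti y (J x)]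
  have hJJ : ∀ x y : V, ω (J x) y = - ω x (J y) := by
    intro x y
    calc ω (J x) y = ω (J (J x)) (J y) := (hJω (J x) y).symm
    _ = ω (-x) (J y) := by rw [hJ2]
    _ = - ω x (J y) := by simp
  letI core : InnerProductSpace.Core ℂ (CxAux J) :=
    { inner := fun x y => ⟨ω x (J y), ω x y⟩
      conj_inner_symm := by
        intro x y
        apply Complex.ext
        · simpa using hgsymm y x
        · show -(ω y x) = ω x y
          linarith [hanti y x]
      re_inner_nonneg := by
        intro x
        show (0:ℝ) ≤ ω x (J x)
        rcases eq_or_ne (x : V) 0 with h | h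
        · simp [h]
        · exact (hJpos x h).le
      add_left := by
        intro x y z
        apply Complex.ext <;> simp
      smul_left := by
        intro x y c
        rw [hsmul]
        apply Complex.ext
        · show ω (c.re • (x:V) + c.im • J x) (J y) = _
          simp [Complex.mul_re, hJω, mul_comm]
        · show ω (c.re • (x:V) + c.im • J x) y = _
          simp [Complex.mul_im, hJJ, mul_comm]
          ring
      definite := by
        intro x hx
        by_contra h
        have h1 : (⟨ω x (J x), ω x x⟩ : ℂ) = 0 := hx
        have := hJpos x h
        have h2 : ω x (J x) = 0 := congrArg Complex.re h1
        linarith }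
  letI : NormedAddCommGroup (CxAux J) := core.toNormedAddCommGroup
  letI : InnerProductSpace ℂ (CxAux J) := InnerProductSpace.ofCore core.toCore
  haveI : FiniteDimensional ℂ (CxAux J) :=
    Module.Finite.of_restrictScalars_finite ℝ ℂ (CxAux J)
  have hdim : finrank ℂ (CxAux J) = finrank ℝ V / 2 := by
    have h1 : finrank ℝ ℂ * finrank ℂ (CxAux J) = finrank ℝ (CxAux J) :=
      finrank_mul_finrank ℝ ℂ (CxAux J)
    rw [Complex.finrank_real_complex] at h1
    have h2 : finrank ℝ (CxAux J) = finrank ℝ V := rfl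
    omega
  let b := (stdOrthonormalBasis ℂ (CxAux J)).reindex (finCongr hdim)
  let e0 : CxAux J ≃ₗᵢ[ℂ] EuclideanSpace ℂ (Fin (finrank ℝ V / 2)) := b.repr
  have hIsm : ∀ x : CxAux J, Complex.I • x = J x := by
    intro x
    rw [hsmul]
    simp
  refine ⟨e0.toLinearEquiv.restrictScalars ℝ, ?_, ?_⟩
  · intro x y
    have := e0.inner_map_map x y
    have h2 : (inner ℂ (x : CxAux J) y).im = ω x y := rfl
    rw [← h2, ← this]
    rfl
  · intro x
    have h := map_smul e0 Complex.I x
    rw [hIsm] at h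
    exact h

/-- The symplectic group Sp(V,ω) acts transitively on the space
𝔖(V,ω) of compatible complex structures, via conjugation a·J = aJa⁻¹:
for any two compatible complex structures J, J' there is a symplectic
automorphism a with a J a⁻¹ = J'. -/
theorem torelli_stmt2 {V : Type*} [AddCommGroup V] [Module ℝ V] [FiniteDimensional ℝ V]
    (ω : V →ₗ[ℝ] V →ₗ[ℝ] ℝ)
    (halt : ∀ x, ω x x = 0)
    (hnondeg : ∀ x, (∀ y, ω x y = 0) → x = 0)
    (J J' : V →ₗ[ℝ] V)
    (hJ2 : ∀ v, J (J v) = -v) (hJω : ∀ x y, ω (J x) (J y) = ω x y)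
    (hJpos : ∀ x, x ≠ 0 → 0 < ω x (J x))
    (hJ'2 : ∀ v, J' (J' v) = -v) (hJ'ω : ∀ x y, ω (J' x) (J' y) = ω x y)
    (hJ'pos : ∀ x, x ≠ 0 → 0 < ω x (J' x)) :
    ∃ a : V ≃ₗ[ℝ] V, (∀ x y, ω (a x) (a y) = ω x y) ∧
      (∀ v, a (J (a.symm v)) = J' v) := by
  have hanti : ∀ x y, ω x y = -ω y x := by
    intro x y
    have h := halt (x + y)
    simp only [map_add, LinearMap.add_apply, halt] at h
    linarith
  obtain ⟨e, he1, he2⟩ := torelli_aux ω hanti J hJ2 hJω hJpos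
  obtain ⟨e', he'1, he'2⟩ := torelli_aux ω hanti J' hJ'2 hJ'ω hJ'pos
  refine ⟨e.trans e'.symm, ?_, ?_⟩
  · intro x y
    simp only [LinearEquiv.trans_apply]
    rw [he'1 (e'.symm (e x)) (e'.symm (e y)), he1 x y]
    simp [LinearEquiv.apply_symm_apply]
  · intro v
    have h2 : (e.trans e'.symm).symm v = e.symm (e' v) := rfl
    simp only [LinearEquiv.trans_apply, h2]
    rw [he2 (e.symm (e' v)), LinearEquiv.apply_symm_apply]
    apply e'.injective
    rw [LinearEquiv.apply_symm_apply, he'2 v]
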